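/- For every t ∈ ℝ with |t| ≤ 3/2, the value 3/2 − |t| belongs to {|s| : s ∈ Spec(t)} and is its minimum: every s ∈ Spec(t) satisfies |s| ≥ 3/2 − |t|, and this bound is attained (by s = 3/2 − t if t ≥ 0 and by s = 3/2 + t if t ≤ 0). In other words, the smallest magnetic Dirac eigenvalue of the round 3-sphere in absolute value is |λ₁^{tη}| = 3/2 − |t| for |t| ≤ 3/2, so that |λ₁^{tη}| + |t| = 3/2. -/
import Mathlib


/-- `f₀(k,p,t) = (1 + t + 2p − k)² + 4(k − p)(p + 1)`. -/
noncomputable def f0 (k p : ℤ) (t : ℝ) : ℝ :=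
  (1 + t + 2 * (p : ℝ) - (k : ℝ)) ^ 2 + 4 * ((k : ℝ) - (p : ℝ)) * ((p : ℝ) + 1)

/-- The spectrum of the magnetic Dirac operator `D^{tη}` on the round 3-sphere of
sectional curvature 1, where `η` is the Reeb one-form of the Hopf fibration. -/
noncomputable def Spec (t : ℝ) : Set ℝ :=
  {s | ∃ k : ℕ, s = 3 / 2 + (k : ℝ) + t} ∪
    {s | ∃ k : ℕ, s = 3 / 2 + (k : ℝ) - t} ∪
    {s | ∃ k p : ℕ, p < k ∧ s = 1 / 2 + Real.sqrt (f0 (k : ℤ) (p : ℤ) t)} ∪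
    {s | ∃ k p : ℕ, p < k ∧ s = 1 / 2 - Real.sqrt (f0 (k : ℤ) (p : ℤ) t)}

lemma sqrt_f0_ge (k p : ℕ) (h : p < k) (t : ℝ) :
    (2 : ℝ) ≤ Real.sqrt (f0 (k : ℤ) (p : ℤ) t) := by
  have h1 : (1 : ℝ) ≤ (k : ℝ) - (p : ℝ) := by
    have : (p : ℝ) + 1 ≤ (k : ℝ) := by exact_mod_cast h
    linarith
  have h2 : (1 : ℝ) ≤ (p : ℝ) + 1 := by
    have : (0 : ℝ) ≤ (p : ℝ) := Nat.cast_nonneg p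
    linarith
  have hf : (4 : ℝ) ≤ f0 (k : ℤ) (p : ℤ) t := by
    unfold f0
    push_cast
    nlinarith [sq_nonneg (1 + t + 2 * (p : ℝ) - (k : ℝ))]
  calc (2 : ℝ) = Real.sqrt 4 := by
        rw [show (4 : ℝ) = 2 ^ 2 by norm_num, Real.sqrt_sq (by norm_num)]
    _ ≤ Real.sqrt (f0 (k : ℤ) (p : ℤ) t) := Real.sqrt_le_sqrt hf

/-- For `|t| ≤ 3/2`, the value `3/2 − |t|` is the minimum of `{|s| : s ∈ Spec t}`,
attained by `s = 3/2 − t` if `t ≥ 0` and by `s = 3/2 + t` if `t ≤ 0`. -/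
theorem stmt11 (t : ℝ) (ht : |t| ≤ 3 / 2) :
    IsLeast {r : ℝ | ∃ s ∈ Spec t, |s| = r} (3 / 2 - |t|) ∧
    (0 ≤ t → (3 / 2 - t) ∈ Spec t) ∧ (t ≤ 0 → (3 / 2 + t) ∈ Spec t) := by
  have ht1 : -(3 / 2) ≤ t := neg_le_of_abs_le ht
  have ht2 : t ≤ 3 / 2 := le_of_abs_le ht
  have hmem1 : 0 ≤ t → (3 / 2 - t) ∈ Spec t := by
    intro h
    refine Or.inl (Or.inl (Or.inr ⟨0, ?_⟩))
    push_cast; ring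
  have hmem2 : t ≤ 0 → (3 / 2 + t) ∈ Spec t := by
    intro h
    refine Or.inl (Or.inl (Or.inl ⟨0, ?_⟩))
    push_cast; ring
  refine ⟨⟨?_, ?_⟩, hmem1, hmem2⟩
  · rcases le_or_gt 0 t with h | h
    · refine ⟨3 / 2 - t, hmem1 h, ?_⟩
      rw [abs_of_nonneg h, abs_of_nonneg (by linarith)]
    · refine ⟨3 / 2 + t, hmem2 h.le, ?_⟩
      rw [abs_of_neg h, abs_of_nonneg (by linarith)]; ring
  · rintro r ⟨s, hs, rfl⟩
    have habs : -t ≤ |t| := neg_le_abs t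
    have habs' : t ≤ |t| := le_abs_self t
    rcases hs with ((⟨k, rfl⟩ | ⟨k, rfl⟩) | ⟨k, p, hpk, rfl⟩) | ⟨k, p, hpk, rfl⟩
    · have hk : (0 : ℝ) ≤ (k : ℝ) := Nat.cast_nonneg k
      have : 3 / 2 - |t| ≤ 3 / 2 + (k : ℝ) + t := by linarith
      exact this.trans (le_abs_self _)
    · have hk : (0 : ℝ) ≤ (k : ℝ) := Nat.cast_nonneg k
      have : 3 / 2 - |t| ≤ 3 / 2 + (k : ℝ) - t := by linarith
      exact this.trans (le_abs_self _)
    · have h2 := sqrt_f0_ge k p hpk t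
      have ha : (0 : ℝ) ≤ |t| := abs_nonneg t
      have : 3 / 2 - |t| ≤ 1 / 2 + Real.sqrt (f0 (k : ℤ) (p : ℤ) t) := by linarith
      exact this.trans (le_abs_self _)
    · have h2 := sqrt_f0_ge k p hpk t
      have ha : (0 : ℝ) ≤ |t| := abs_nonneg t
      have : 3 / 2 - |t| ≤ -(1 / 2 - Real.sqrt (f0 (k : ℤ) (p : ℤ) t)) := by linarith
      exact this.trans (neg_le_abs _)
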